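/- If a Markov transition kernel Q₁ on a measurable space S satisfies detailed balance with respect to a probability measure π₁ proportional to exp(-R(u)) μ₀(du), and the second-stage Metropolis kernel with acceptance probability acc_Φ(u,v) = min{1, exp(-(Φ(v) - Φ(u)))} is applied to proposals drawn from Q₁, then the composite kernel Q(u, dv) = acc_Φ(u,v) Q₁(u, dv) + δ_u(dv)(1 - ∫ acc_Φ(u,z) Q₁(u, dz)) satisfies detailed balance with respect to the measure μ^y proportional to exp(-Φ(u) - R(u)) μ₀(du). -/

import Mathlib

open MeasureTheory

/-- Detailed balance of the splitting (S-pCN) kernel: if `Q₁` is in detailed balance with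
respect to `π₁ ∝ exp(-R) μ₀`, then the composite kernel obtained by accepting proposals of
`Q₁` with probability `min{1, exp(-(Φ v - Φ u))}` is in detailed balance with respect to
`μ^y ∝ exp(-Φ - R) μ₀`. -/
theorem splitting_pcn_detailed_balance
    {S : Type*} [MeasurableSpace S]
    (μ₀ : Measure S) [IsProbabilityMeasure μ₀]
    (Φ R : S → ℝ) (hΦm : Measurable Φ) (hRm : Measurable R)
    (Z₁ Z : ℝ) (hZ₁pos : 0 < Z₁) (hZpos : 0 < Z)
    (hZ₁ : Z₁ = ∫ u, Real.exp (-(R u)) ∂μ₀)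
    (hZ : Z = ∫ u, Real.exp (-(Φ u) - R u) ∂μ₀)
    (π₁ : Measure S)
    (hπ₁ : π₁ = μ₀.withDensity (fun u => ENNReal.ofReal (Real.exp (-(R u)) / Z₁)))
    (μy : Measure S)
    (hμy : μy = μ₀.withDensity (fun u => ENNReal.ofReal (Real.exp (-(Φ u) - R u) / Z)))
    (Q₁ : S → Measure S)
    (hQ₁m : Measurable Q₁)
    (hQ₁prob : ∀ u, IsProbabilityMeasure (Q₁ u))
    (hQ₁db : ∀ A B : Set S, MeasurableSet A → MeasurableSet B →
      ∫⁻ u in A, Q₁ u B ∂π₁ = ∫⁻ v in B, Q₁ v A ∂π₁)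
    (accΦ : S → S → ℝ)
    (haccΦ : ∀ u v, accΦ u v = min 1 (Real.exp (-(Φ v - Φ u))))
    (Q : S → Measure S)
    (hQ : ∀ u, Q u = (Q₁ u).withDensity (fun v => ENNReal.ofReal (accΦ u v))
        + (1 - ∫⁻ z, ENNReal.ofReal (accΦ u z) ∂(Q₁ u)) • Measure.dirac u) :
    ∀ A B : Set S, MeasurableSet A → MeasurableSet B →
      ∫⁻ u in A, Q u B ∂μy = ∫⁻ v in B, Q v A ∂μy := by
  classical
  have hZ₁ne : Z₁ ≠ 0 := ne_of_gt hZ₁pos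
  have hZne : Z ≠ 0 := ne_of_gt hZpos
  -- integrability of exp(-R)
  have hRint : Integrable (fun u => Real.exp (-(R u))) μ₀ := by
    by_contra h
    rw [integral_undef h] at hZ₁
    exact hZ₁pos.ne' hZ₁
  -- π₁ is a probability measure
  have hπ₁prob : IsProbabilityMeasure π₁ := by
    constructor
    rw [hπ₁, withDensity_apply _ MeasurableSet.univ, Measure.restrict_univ,
      ← ofReal_integral_eq_lintegral_ofReal (hRint.div_const _)
        (Filter.Eventually.of_forall fun u => by positivity)]
    rw [integral_div, ← hZ₁, div_self hZ₁ne, ENNReal.ofReal_one]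
  -- the kernel
  set κ : ProbabilityTheory.Kernel S S := ⟨Q₁, hQ₁m⟩ with hκ
  have hκapp : ∀ u, κ u = Q₁ u := fun u => rfl
  have hκMarkov : ProbabilityTheory.IsMarkovKernel κ := ⟨hQ₁prob⟩
  -- measurability of acceptance prob
  have haccm : Measurable (fun p : S × S => ENNReal.ofReal (accΦ p.1 p.2)) := by
    simp only [haccΦ]
    exact (measurable_const.min (((hΦm.comp measurable_snd).sub
      (hΦm.comp measurable_fst)).neg.exp)).ennreal_ofReal
  -- the symmetric function g
  set g : S → S → ENNReal := fun u v =>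
    ENNReal.ofReal (Z₁ / Z * min (Real.exp (-(Φ u))) (Real.exp (-(Φ v)))) with hg
  have hgsymm : ∀ u v, g u v = g v u := by
    intro u v; simp only [hg, min_comm]
  have hgm : Measurable (fun p : S × S => g p.1 p.2) := by
    apply Measurable.ennreal_ofReal
    exact measurable_const.mul (((hΦm.comp measurable_fst).neg.exp).min
      ((hΦm.comp measurable_snd).neg.exp))
  -- density of μy wrt π₁
  set d : S → ENNReal := fun u => ENNReal.ofReal (Real.exp (-(Φ u)) * Z₁ / Z) with hd
  have hdm : Measurable d := by
    apply Measurable.ennreal_ofReal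
    exact (hΦm.neg.exp.mul_const _).div_const _
  have hμyπ₁ : μy = π₁.withDensity d := by
    rw [hπ₁, hμy, ← withDensity_mul _ (by measurability) hdm]
    congr 1
    ext u
    simp only [Pi.mul_apply, hd]
    rw [← ENNReal.ofReal_mul (by positivity)]
    congr 1
    rw [sub_eq_add_neg, Real.exp_add]
    field_simp
  -- pointwise: d u * acc u v = g u v
  have hkey_pt : ∀ u v, d u * ENNReal.ofReal (accΦ u v) = g u v := by
    intro u v
    simp only [hd, hg, haccΦ]
    rw [← ENNReal.ofReal_mul (by positivity)]
    congr 1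
    have harg : -Φ u + -(Φ v - Φ u) = -Φ v := by ring
    have hmm : Real.exp (-(Φ u)) * min 1 (Real.exp (-(Φ v - Φ u)))
        = min (Real.exp (-(Φ u))) (Real.exp (-(Φ v))) := by
      rw [mul_min_of_nonneg _ _ (Real.exp_nonneg _), mul_one, ← Real.exp_add, harg]
    calc Real.exp (-Φ u) * Z₁ / Z * min 1 (Real.exp (-(Φ v - Φ u)))
        = Z₁ / Z * (Real.exp (-(Φ u)) * min 1 (Real.exp (-(Φ v - Φ u)))) := by ring
      _ = _ := by rw [hmm]
  -- the composite measure and its swap-invariance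
  set M : Measure (S × S) := π₁.compProd κ with hM
  have hMfin : IsFiniteMeasure M := by infer_instance
  have hswap : M.map Prod.swap = M := by
    refine ext_of_generate_finite _ generateFrom_prod.symm isPiSystem_prod ?_ ?_
    · rintro s ⟨s₁, hs₁, s₂, hs₂, rfl⟩
      rw [Measure.map_apply measurable_swap (hs₁.prod hs₂)]
      have : Prod.swap ⁻¹' (s₁ ×ˢ s₂) = s₂ ×ˢ s₁ := by
        ext ⟨a, b⟩; simp [and_comm]
      rw [this, hM, Measure.compProd_apply_prod hs₂ hs₁,
        Measure.compProd_apply_prod hs₁ hs₂]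
      simp only [hκapp]
      exact hQ₁db s₂ s₁ hs₂ hs₁
    · rw [Measure.map_apply measurable_swap MeasurableSet.univ]
      simp
  -- measurability of inner integrals
  have hinn : ∀ B : Set S, MeasurableSet B →
      Measurable (fun u => ∫⁻ v in B, ENNReal.ofReal (accΦ u v) ∂(Q₁ u)) := by
    intro B hB
    have hFm : Measurable ((Set.univ ×ˢ B).indicator
        (fun q : S × S => ENNReal.ofReal (accΦ q.1 q.2))) :=
      haccm.indicator (MeasurableSet.univ.prod hB)
    have hmeas := hFm.lintegral_kernel_prod_right' (κ := κ)
    have heq : (fun u => ∫⁻ v in B, ENNReal.ofReal (accΦ u v) ∂(Q₁ u))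
        = fun u => ∫⁻ b, (Set.univ ×ˢ B).indicator
            (fun q : S × S => ENNReal.ofReal (accΦ q.1 q.2)) (u, b) ∂κ u := by
      funext u
      rw [hκapp, ← lintegral_indicator hB]
      congr 1
      funext v
      simp [Set.indicator_apply]
    rw [heq]
    exact hmeas
  -- main part symmetry
  have hmain : ∀ A B : Set S, MeasurableSet A → MeasurableSet B →
      (∫⁻ u in A, (∫⁻ v in B, ENNReal.ofReal (accΦ u v) ∂(Q₁ u)) ∂μy)
        = ∫⁻ p in A ×ˢ B, g p.1 p.2 ∂M := by
    intro A B hA hB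
    rw [hμyπ₁, setLIntegral_withDensity_eq_setLIntegral_mul _ hdm (hinn B hB) hA]
    rw [Measure.setLIntegral_compProd hgm hA hB]
    refine setLIntegral_congr_fun hA (fun u _ => ?_)
    have hm : Measurable (fun v => ENNReal.ofReal (accΦ u v)) :=
      haccm.comp measurable_prodMk_left
    simp only [Pi.mul_apply, hκapp]
    rw [← lintegral_const_mul (d u) hm]
    exact setLIntegral_congr_fun hB (fun v _ => hkey_pt u v)
  -- conclusion
  intro A B hA hB
  have hQapp : ∀ (u : S) (C : Set S), MeasurableSet C → Q u C
      = (∫⁻ v in C, ENNReal.ofReal (accΦ u v) ∂(Q₁ u))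
        + (1 - ∫⁻ z, ENNReal.ofReal (accΦ u z) ∂(Q₁ u)) * C.indicator 1 u := by
    intro u C hC
    rw [hQ u]
    simp only [Measure.coe_add, Pi.add_apply, Measure.smul_apply, smul_eq_mul]
    rw [withDensity_apply _ hC, Measure.dirac_apply' _ hC]
  have hsplit : ∀ A B : Set S, MeasurableSet A → MeasurableSet B →
      ∫⁻ u in A, Q u B ∂μy
        = (∫⁻ u in A, (∫⁻ v in B, ENNReal.ofReal (accΦ u v) ∂(Q₁ u)) ∂μy)
          + ∫⁻ u in A ∩ B, (1 - ∫⁻ z, ENNReal.ofReal (accΦ u z) ∂(Q₁ u)) ∂μy := by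
    intro A B hA hB
    have h1 : ∀ u, Q u B = (∫⁻ v in B, ENNReal.ofReal (accΦ u v) ∂(Q₁ u))
        + B.indicator (fun u => 1 - ∫⁻ z, ENNReal.ofReal (accΦ u z) ∂(Q₁ u)) u := by
      intro u
      rw [hQapp u B hB]
      congr 1
      by_cases hu : u ∈ B <;> simp [Set.indicator_of_mem, Set.indicator_of_notMem, hu]
    rw [lintegral_congr h1, lintegral_add_left (hinn B hB)]
    congr 1
    rw [lintegral_indicator hB, Measure.restrict_restrict hB, Set.inter_comm]
  rw [hsplit A B hA hB, hsplit B A hB hA, Set.inter_comm]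
  congr 1
  rw [hmain A B hA hB, hmain B A hB hA]
  -- use swap invariance
  calc ∫⁻ p in A ×ˢ B, g p.1 p.2 ∂M
      = ∫⁻ p in A ×ˢ B, g p.1 p.2 ∂(M.map Prod.swap) := by rw [hswap]
    _ = ∫⁻ p in Prod.swap ⁻¹' (A ×ˢ B), g (Prod.swap p).1 (Prod.swap p).2 ∂M := by
        rw [setLIntegral_map (hA.prod hB) hgm measurable_swap]
    _ = ∫⁻ p in B ×ˢ A, g p.1 p.2 ∂M := by
        have hset : Prod.swap ⁻¹' (A ×ˢ B) = B ×ˢ A := by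
          ext ⟨a, b⟩; simp [and_comm]
        rw [hset]
        exact lintegral_congr fun p => hgsymm p.2 p.1
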